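/- If u, v ∈ H satisfy u² = u, v² = v and uvuvuv = vuvuvu, then for all x, y ∈ A: h_u(x)·h_v(x³y)·h_u(x²y)·h_v(x³y²)·h_u(xy)·h_v(y) = h_v(y)·h_u(xy)·h_v(x³y²)·h_u(x²y)·h_v(x³y)·h_u(x). -/
import Mathlib


/-- `h_u(x) = 1 + (x - 1)·u` in an associative unital `A`-algebra `H`. -/
def heckeFactor {A H : Type*} [CommRing A] [Ring H] [Algebra A H] (u : H) (x : A) : H :=
  1 + (x - 1) • u

/-- Yang–Baxter type relation for a pair of idempotents satisfying the braid relation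
of order `6` (i.e. `uvuvuv = vuvuvu`): for all `x y : A`,
`h_u(x)·h_v(x³y)·h_u(x²y)·h_v(x³y²)·h_u(xy)·h_v(y)
  = h_v(y)·h_u(xy)·h_v(x³y²)·h_u(x²y)·h_v(x³y)·h_u(x)`. -/
theorem yangBaxter_order_six {A H : Type*} [CommRing A] [Ring H] [Algebra A H]
    (u v : H) (hu : u ^ 2 = u) (hv : v ^ 2 = v)
    (hbraid : u * v * u * v * u * v = v * u * v * u * v * u) (x y : A) :
    heckeFactor u x * heckeFactor v (x ^ 3 * y) * heckeFactor u (x ^ 2 * y) *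
        heckeFactor v (x ^ 3 * y ^ 2) * heckeFactor u (x * y) * heckeFactor v y
      = heckeFactor v y * heckeFactor u (x * y) * heckeFactor v (x ^ 3 * y ^ 2) *
          heckeFactor u (x ^ 2 * y) * heckeFactor v (x ^ 3 * y) * heckeFactor u x := by
  have hu1 : u * u = u := by rw [← sq, hu]
  have hv1 : v * v = v := by rw [← sq, hv]
  have hu2 : ∀ t : H, u * (u * t) = u * t := fun t => by rw [← mul_assoc, hu1]
  have hv2 : ∀ t : H, v * (v * t) = v * t := fun t => by rw [← mul_assoc, hv1]
  have hb : u * (v * (u * (v * (u * v)))) = v * (u * (v * (u * (v * u)))) := by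
    simpa [mul_assoc] using hbraid
  simp only [heckeFactor, add_mul, mul_add, one_mul, mul_one, smul_mul_assoc,
    mul_smul_comm, smul_smul, mul_assoc, hu1, hv1, hu2, hv2, hb]
  match_scalars <;> ring
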